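/- Let γ ∈ (0,2), Q = γ/2 + 2/γ and μ > 0, and define R^{DOZZ}(α) = −( πμ l(γ²/4) )^{2(Q−α)/γ} · ( Γ(−γ(Q−α)/2) / Γ(γ(Q−α)/2) ) · ( Γ(−2(Q−α)/γ) / Γ(2(Q−α)/γ) ) for real α. Then for every real α such that none of the Gamma functions appearing on either side of the equation below is evaluated at a nonpositive integer, R^{DOZZ} satisfies the first shift equation R^{DOZZ}(α) = −μπ · R^{DOZZ}(α + γ/2) / ( l(−γ²/4) · l(γα/2) · l(2 + γ²/4 − γα/2) ). -/

import Mathlib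

set_option maxHeartbeats 1000000


open MeasureTheory Set

/-- The special function `l(x) = Γ(x)/Γ(1-x)`. -/
noncomputable def lr (x : ℝ) : ℝ := Real.Gamma x / Real.Gamma (1 - x)

/-- The explicit reflection coefficient `R^{DOZZ}` of Liouville conformal field theory. -/
noncomputable def Rdozz (γ μ α : ℝ) : ℝ :=
  -(Real.pi * μ * lr (γ^2/4)) ^ (2*((γ/2 + 2/γ) - α)/γ)
    * (Real.Gamma (-(γ*((γ/2 + 2/γ) - α)/2)) / Real.Gamma (γ*((γ/2 + 2/γ) - α)/2))
    * (Real.Gamma (-(2*((γ/2 + 2/γ) - α)/γ)) / Real.Gamma (2*((γ/2 + 2/γ) - α)/γ))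

/-- First shift equation for the explicit reflection coefficient:
`R(α) = -μπ R(α+γ/2) / ( l(-γ²/4) l(γα/2) l(2+γ²/4-γα/2) )`. -/
theorem rdozz_first_shift (γ μ α : ℝ) (hγ : γ ∈ Set.Ioo (0:ℝ) 2) (hμ : 0 < μ)
    (hΓ : ∀ x ∈ ([γ^2/4, 1 - γ^2/4,
        -(γ*((γ/2 + 2/γ) - α)/2), γ*((γ/2 + 2/γ) - α)/2,
        -(2*((γ/2 + 2/γ) - α)/γ), 2*((γ/2 + 2/γ) - α)/γ,
        -(γ*((γ/2 + 2/γ) - (α + γ/2))/2), γ*((γ/2 + 2/γ) - (α + γ/2))/2,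
        -(2*((γ/2 + 2/γ) - (α + γ/2))/γ), 2*((γ/2 + 2/γ) - (α + γ/2))/γ,
        -γ^2/4, 1 + γ^2/4,
        γ*α/2, 1 - γ*α/2,
        2 + γ^2/4 - γ*α/2, 1 - (2 + γ^2/4 - γ*α/2)] : List ℝ),
      ∀ n : ℕ, x ≠ -(n:ℝ)) :
    Rdozz γ μ α
      = -μ * Real.pi * Rdozz γ μ (α + γ/2)
          / (lr (-γ^2/4) * lr (γ*α/2) * lr (2 + γ^2/4 - γ*α/2)) := by
  obtain ⟨hγ0, hγ2⟩ := hγ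
  have hγ' : γ ≠ 0 := ne_of_gt hγ0
  simp only [List.mem_cons, List.not_mem_nil, or_false, forall_eq_or_imp, forall_eq] at hΓ
  obtain ⟨h1, h2, h3, h4, h5, h6, h7, h8, h9, h10, h11, h12, h13, h14, h15, h16⟩ := hΓ
  unfold Rdozz lr
  set t : ℝ := γ^2/4 with ht_def
  set a : ℝ := γ*((γ/2 + 2/γ) - α)/2 with ha_def
  set b : ℝ := 2*((γ/2 + 2/γ) - α)/γ with hb_def
  have ht0 : 0 < t := by rw [ht_def]; positivity
  have ht1 : t < 1 := by
    have : γ^2 < 4 := by nlinarith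
    rw [ht_def]; linarith
  have hab : a = t * b := by rw [ha_def, hb_def, ht_def]; field_simp; ring
  have e1 : γ*((γ/2 + 2/γ) - (α + γ/2))/2 = a - t := by
    rw [ha_def, ht_def]; ring
  have e2 : 2*((γ/2 + 2/γ) - (α + γ/2))/γ = b - 1 := by
    rw [hb_def]; field_simp; ring
  have e3 : γ*α/2 = 1 - (a - t) := by
    rw [ha_def, ht_def]; field_simp; ring
  have e4 : 2 + t - γ*α/2 = 1 + a := by
    rw [ha_def, ht_def]; field_simp; ring
  have e5 : -γ^2/4 = -t := by rw [ht_def]; ring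
  -- nonzero scalar facts
  have ha0 : a ≠ 0 := by have := h3 0; simpa using this
  have hnb0 : -b ≠ 0 := by have := h5 0; simpa using this
  have hb0 : b ≠ 0 := neg_ne_zero.mp hnb0
  have hat0 : -(a - t) ≠ 0 := by have := h7 0; rw [e1] at this; simpa using this
  have hat0' : a - t ≠ 0 := neg_ne_zero.mp hat0
  have hb1 : b - 1 ≠ 0 := by have := h10 0; rw [e2] at this; simpa using this
  have ht0' : t ≠ 0 := ne_of_gt ht0
  have hnt0 : -t ≠ 0 := neg_ne_zero.mpr ht0'
  -- Gamma nonzero facts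
  have Ga : Real.Gamma a ≠ 0 := Real.Gamma_ne_zero h4
  have Gna : Real.Gamma (-a) ≠ 0 := Real.Gamma_ne_zero h3
  have Gnb : Real.Gamma (-b) ≠ 0 := Real.Gamma_ne_zero h5
  have Gat : Real.Gamma (a - t) ≠ 0 := Real.Gamma_ne_zero (by rw [← e1]; exact h8)
  have Gnat : Real.Gamma (-(a - t)) ≠ 0 := Real.Gamma_ne_zero (by rw [← e1]; exact h7)
  have Gb1 : Real.Gamma (b - 1) ≠ 0 := Real.Gamma_ne_zero (by rw [← e2]; exact h10)
  have Gnt : Real.Gamma (-t) ≠ 0 :=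
    Real.Gamma_ne_zero (fun m => by rw [← e5]; exact h11 m)
  have Gt : Real.Gamma t ≠ 0 := ne_of_gt (Real.Gamma_pos_of_pos ht0)
  -- functional-equation facts
  have gb : Real.Gamma b = (b - 1) * Real.Gamma (b - 1) := by
    have := Real.Gamma_add_one hb1
    rw [sub_add_cancel] at this; exact this
  have g1 : Real.Gamma (-(b - 1)) = -b * Real.Gamma (-b) := by
    rw [show -(b-1) = -b + 1 by ring, Real.Gamma_add_one hnb0]
  have g2 : Real.Gamma (1 - (a - t)) = -(a - t) * Real.Gamma (-(a - t)) := by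
    rw [show 1 - (a-t) = -(a-t) + 1 by ring, Real.Gamma_add_one hat0]
  have g3 : Real.Gamma (1 + a) = a * Real.Gamma a := by
    rw [show 1 + a = a + 1 by ring, Real.Gamma_add_one ha0]
  have g4 : Real.Gamma (1 + t) = t * Real.Gamma t := by
    rw [show 1 + t = t + 1 by ring, Real.Gamma_add_one ht0']
  have g5 : Real.Gamma (1 - t) = -t * Real.Gamma (-t) := by
    rw [show 1 - t = -t + 1 by ring, Real.Gamma_add_one hnt0]
  -- split the rpow
  have hC : (0:ℝ) < Real.pi * μ * (Real.Gamma t / Real.Gamma (1 - t)) := by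
    have h := Real.pi_pos
    have h2 : 0 < Real.Gamma t := Real.Gamma_pos_of_pos ht0
    have h3 : 0 < Real.Gamma (1 - t) := Real.Gamma_pos_of_pos (by linarith)
    positivity
  have hr : (Real.pi * μ * (Real.Gamma t / Real.Gamma (1 - t))) ^ b
      = (Real.pi * μ * (Real.Gamma t / Real.Gamma (1 - t))) ^ (b - 1)
        * (Real.pi * μ * (Real.Gamma t / Real.Gamma (1 - t))) := by
    rw [← Real.rpow_add_one (ne_of_gt hC) (b - 1), sub_add_cancel]
  -- rewrite the goal
  rw [e1, e2, e5]
  rw [show (1:ℝ) - -t = 1 + t by ring]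
  rw [e4, show (1:ℝ) - (1 + a) = -a by ring]
  rw [e3, show (1:ℝ) - (1 - (a - t)) = a - t by ring]
  rw [hr, gb, g1, g2, g3, g4, g5]
  set P : ℝ := (Real.pi * μ * (Real.Gamma t / (-t * Real.Gamma (-t)))) ^ (b - 1) with hP
  set GA := Real.Gamma a with hGA
  set GNA := Real.Gamma (-a) with hGNA
  set GAT := Real.Gamma (a - t) with hGAT
  set GNAT := Real.Gamma (-(a - t)) with hGNAT
  set GB1 := Real.Gamma (b - 1) with hGB1
  set GNB := Real.Gamma (-b) with hGNB
  set GT := Real.Gamma t with hGT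
  set GNT := Real.Gamma (-t) with hGNT
  clear_value t a b P GA GNA GAT GNAT GB1 GNB GT GNT
  have htb : t * b ≠ 0 := mul_ne_zero ht0' hb0
  have htb1 : t * b - t ≠ 0 := by rw [← hab]; exact hat0'
  rw [hab]
  have hμ' : μ ≠ 0 := ne_of_gt hμ
  have hπ : Real.pi ≠ 0 := Real.pi_ne_zero
  have key : GNAT * b * t ^ 2 * GAT * GNT * GA * GB1 - GNAT * b ^ 2 * t ^ 2 * GAT * GNT * GA * GB1 ≠ 0 := by
    have heq : GNAT * b * t ^ 2 * GAT * GNT * GA * GB1 - GNAT * b ^ 2 * t ^ 2 * GAT * GNT * GA * GB1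
        = -(GNAT * t ^ 2 * GAT * GNT * GA * GB1 * (b * (b - 1))) := by ring
    rw [heq, neg_ne_zero]
    exact mul_ne_zero (mul_ne_zero (mul_ne_zero (mul_ne_zero (mul_ne_zero
      (mul_ne_zero Gnat (pow_ne_zero 2 ht0')) Gat) Gnt) Ga) Gb1) (mul_ne_zero hb0 hb1)
  field_simp
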